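/- Let X be a finite rooted tree where each node v is either accepted or rejected in a verification process, with E[p_v(¬v)] = 1 − p̃_v (expected rejection mass equals one minus the prefix acceptance probability) for each parent v. If a two-stage process accepts a node's children set with marginal expected acceptance E[p_v(u)] = p̃_v·M_b(u|v) for each token u, then the probability of accepting at least one node in the subtree of v (including fallback to v itself with probability 1 − (1−p̃_v^res)∏_{u∈C(v)}(1−p̃_u)) equals p̃_v. -/

import Mathlib

theorem subtree_acceptance_probability {Ω : Type*} [Fintype Ω]
    (m : ℕ) (w : Ω → ℝ) (p : Ω → ℕ → ℝ) (pneg : Ω → ℝ) (pv : ℝ)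
    (hw : ∀ ω, 0 ≤ w ω) (hws : ∑ ω, w ω = 1)
    (hp : ∀ ω i, 0 ≤ p ω i)
    (hpartial : ∀ ω, ∀ j ≤ m, ∑ i ∈ Finset.range j, p ω i < 1)
    (hneg : ∀ ω, pneg ω = 1 - ∑ i ∈ Finset.range m, p ω i)
    (hE : ∑ ω, w ω * pneg ω = 1 - pv) :
    ∑ ω, w ω *
      (1 - (∏ j ∈ Finset.range m,
              (1 - p ω j / (1 - ∑ i ∈ Finset.range j, p ω i))) *
           (1 - (1 - pneg ω / (1 - ∑ i ∈ Finset.range m, p ω i))))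
      = pv := by
  have key : ∀ ω, (∏ j ∈ Finset.range m,
      (1 - p ω j / (1 - ∑ i ∈ Finset.range j, p ω i))) =
      1 - ∑ i ∈ Finset.range m, p ω i := by
    intro ω
    have tele : ∀ n, n ≤ m → (∏ j ∈ Finset.range n,
        (1 - p ω j / (1 - ∑ i ∈ Finset.range j, p ω i))) =
        1 - ∑ i ∈ Finset.range n, p ω i := by
      intro n hn
      induction n with
      | zero => simp
      | succ k ih =>
        have hk : k ≤ m := Nat.le_of_succ_le hn
        have hne : (1 - ∑ i ∈ Finset.range k, p ω i) ≠ 0 :=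
          sub_ne_zero.mpr (LT.lt.ne' (hpartial ω k hk))
        rw [Finset.prod_range_succ, ih hk, Finset.sum_range_succ]
        field_simp
        ring
    exact tele m le_rfl
  have h1 : ∀ ω, w ω *
      (1 - (∏ j ∈ Finset.range m,
              (1 - p ω j / (1 - ∑ i ∈ Finset.range j, p ω i))) *
           (1 - (1 - pneg ω / (1 - ∑ i ∈ Finset.range m, p ω i))))
      = w ω * (1 - pneg ω) := by
    intro ω
    have hne : (1 - ∑ i ∈ Finset.range m, p ω i) ≠ 0 :=
      sub_ne_zero.mpr (LT.lt.ne' (hpartial ω m le_rfl))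
    rw [key ω]
    congr 1
    field_simp
    ring
  calc ∑ ω, w ω *
      (1 - (∏ j ∈ Finset.range m,
              (1 - p ω j / (1 - ∑ i ∈ Finset.range j, p ω i))) *
           (1 - (1 - pneg ω / (1 - ∑ i ∈ Finset.range m, p ω i))))
      = ∑ ω, w ω * (1 - pneg ω) := Finset.sum_congr rfl (fun ω _ => h1 ω)
    _ = ∑ ω, w ω - ∑ ω, w ω * pneg ω := by
        rw [← Finset.sum_sub_distrib]; congr 1; ext ω; ring
    _ = pv := by rw [hws, hE]; ring
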